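/- Let F be a finite field and let T be a (j+1)×(j+1) lower triangular Toeplitz matrix over F. Then T is superregular if and only if the (j+1)×(2j+2) matrix [I_{j+1} | T] obtained by placing the identity matrix to the left of T has the following maximum span property: the first column of T, viewed as a column of [I_{j+1} | T], is not contained in the linear span of any other j columns of [I_{j+1} | T]. -/

import Mathlib

open Finset Submodule

/-- A square matrix is a lower triangular Toeplitz matrix if its entries below
and on the diagonal depend only on the difference of the indices, determined by
the first column, and the entries above the diagonal vanish. -/
def IsLTToeplitz {F : Type*} [CommRing F] {m : ℕ}
    (A : Matrix (Fin m) (Fin m) F) : Prop :=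
  ∃ a : ℕ → F, ∀ r c : Fin m,
    A r c = if (c : ℕ) ≤ (r : ℕ) then a ((r : ℕ) - (c : ℕ)) else 0

/-- A square matrix is superregular if it is a lower triangular Toeplitz matrix
and every proper submatrix (rows `i₁ < … < iₛ`, columns `j₁ < … < jₛ` with
`jᵥ ≤ iᵥ` for all `ν`) has a nonzero determinant. -/
def Superregular {F : Type*} [CommRing F] {m : ℕ}
    (A : Matrix (Fin m) (Fin m) F) : Prop :=
  IsLTToeplitz A ∧
  ∀ (s : ℕ) (i j : Fin s → Fin m), StrictMono i → StrictMono j →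
    (∀ ν : Fin s, (j ν : ℕ) ≤ (i ν : ℕ)) → (A.submatrix i j).det ≠ 0

lemma span_helper {F V ι : Type*} [Field F] [AddCommGroup V] [Module F V]
    (col : ι → V) (S : Finset ι) (x : V) :
    x ∈ Submodule.span F (col '' ↑S) ↔ ∃ g : ι → F, ∑ c ∈ S, g c • col c = x := by
  classical
  constructor
  · intro hx
    obtain ⟨l, hls, hlx⟩ := (Finsupp.mem_span_image_iff_linearCombination F).1 hx
    refine ⟨l, ?_⟩
    rw [← hlx, Finsupp.linearCombination_apply, Finsupp.sum]
    refine (Finset.sum_subset ?_ ?_).symm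
    · exact fun i hi => by simpa using hls hi
    · intro i _ hi
      simp [Finsupp.notMem_support_iff.1 hi]
  · rintro ⟨g, rfl⟩
    exact sum_mem fun c hc => smul_mem _ _ (subset_span ⟨c, hc, rfl⟩)

lemma superreg_key {F : Type*} [Field F] {j : ℕ} (T : Matrix (Fin (j+1)) (Fin (j+1)) F)
    (a : ℕ → F) (ha : ∀ r c : Fin (j+1), T r c = if (c:ℕ) ≤ (r:ℕ) then a ((r:ℕ)-(c:ℕ)) else 0)
    (hdet : ∀ (s : ℕ) (i jc : Fin s → Fin (j+1)), StrictMono i → StrictMono jc →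
      (∀ ν : Fin s, (jc ν : ℕ) ≤ (i ν : ℕ)) → (T.submatrix i jc).det ≠ 0) :
    ∀ (n : ℕ) (J' K : Finset (Fin (j+1))), J'.card = n → (0 : Fin (j+1)) ∉ J' →
      K.card + J'.card ≤ j → ∀ lam : Fin (j+1) → F,
      ¬ (∀ r : Fin (j+1), r ∉ K → T r 0 = ∑ c ∈ J', lam c * T r c) := by
  classical
  intro n
  induction n using Nat.strong_induction_on with
  | _ n IH =>
  intro J' K hn h0J hcard lam h
  -- setup
  set J : Finset (Fin (j+1)) := insert 0 J' with hJdef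
  have hJcard : J.card = n + 1 := by rw [hJdef, Finset.card_insert_of_notMem h0J, hn]
  set R : Finset (Fin (j+1)) := Kᶜ with hRdef
  have hKj : K.card ≤ j := by omega
  have hmcard : R.card = j + 1 - K.card := by
    rw [hRdef, Finset.card_compl, Fintype.card_fin]
  have htm : n + 1 ≤ R.card := by omega
  set m : ℕ := R.card with hmdef
  set jfun := J.orderEmbOfFin hJcard with hjfun
  set rfun := R.orderEmbOfFin rfl with hrfun
  set gsel : Fin (n+1) → Fin (j+1) := fun ν => rfun ⟨m - (n+1) + ν, by omega⟩ with hgsel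
  have hgmono : StrictMono gsel := by
    intro ν ν' hlt
    exact rfun.strictMono (by simp only [Fin.mk_lt_mk]; omega)
  have hjfun0 : jfun 0 = 0 := by
    have h0 := Finset.orderEmbOfFin_zero hJcard (Nat.succ_pos n)
    have e0 : (⟨0, Nat.succ_pos n⟩ : Fin (n+1)) = 0 := rfl
    rw [e0] at h0
    rw [hjfun, h0]
    exact le_antisymm (Finset.min'_le _ _ (Finset.mem_insert_self _ _)) (Fin.zero_le _)
  have hjmem : ∀ ν, jfun ν ∈ J := fun ν => Finset.orderEmbOfFin_mem _ _ _
  have hgmem : ∀ ν, gsel ν ∈ R := fun ν => Finset.orderEmbOfFin_mem _ _ _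
  by_cases hcase : ∀ ν : Fin (n+1), jfun ν ≤ gsel ν
  · -- proper selection exists: contradiction with superregularity
    refine hdet (n+1) gsel jfun hgmono jfun.strictMono (fun ν => hcase ν) ?_
    rw [← Matrix.exists_mulVec_eq_zero_iff]
    refine ⟨fun μ => if jfun μ = 0 then -1 else lam (jfun μ), ?_, ?_⟩
    · intro heq
      have := congrFun heq 0
      rw [hjfun0] at this
      simp at this
    · funext ν
      have hr : gsel ν ∉ K := by
        have := hgmem ν; rwa [hRdef, Finset.mem_compl] at this
      have himg : Finset.image (fun μ => jfun μ) Finset.univ = J := by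
        ext c
        simp only [Finset.mem_image, Finset.mem_univ, true_and]
        constructor
        · rintro ⟨μ, rfl⟩; exact hjmem μ
        · intro hc
          have : c ∈ Set.range (fun μ => jfun μ) := by
            rw [hjfun, Finset.range_orderEmbOfFin]; exact hc
          obtain ⟨μ, hμ⟩ := this; exact ⟨μ, hμ⟩
      have hsum : ∀ f : Fin (j+1) → F,
          ∑ μ : Fin (n+1), f (jfun μ) = ∑ c ∈ J, f c := by
        intro f
        rw [← himg, Finset.sum_image (fun x _ y _ hxy => jfun.injective hxy)]
      show ∑ μ : Fin (n+1), T (gsel ν) (jfun μ) * _ = _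
      rw [show (∑ μ : Fin (n+1), T (gsel ν) (jfun μ) *
          (if jfun μ = 0 then -1 else lam (jfun μ))) =
          ∑ c ∈ J, T (gsel ν) c * (if c = 0 then -1 else lam c) from
        hsum (fun c => T (gsel ν) c * (if c = 0 then -1 else lam c))]
      rw [hJdef, Finset.sum_insert h0J]
      rw [Finset.sum_congr rfl (fun c hc => by
        rw [if_neg (by rintro rfl; exact h0J hc)])]
      simp only [if_pos rfl, mul_neg_one, Pi.zero_apply]
      have := h (gsel ν) hr
      rw [this]
      rw [Finset.sum_congr rfl (fun c _ => mul_comm (T (gsel ν) c) (lam c))]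
      simp
  · push_neg at hcase
    obtain ⟨ν₀, hν₀'⟩ := hcase
    set A := R.filter (fun r => jfun ν₀ ≤ r) with hAdef
    have hrq : ∀ (x : Fin (j+1)) (hx : x ∈ R),
        rfun ((R.orderIsoOfFin rfl).symm ⟨x, hx⟩) = x := by
      intro x hx
      rw [hrfun, ← Finset.coe_orderIsoOfFin_apply, OrderIso.apply_symm_apply]
    have hAcard : A.card ≤ n - (ν₀ : ℕ) := by
      have hmaps : ∀ x ∈ A, (if hx : x ∈ R then
          (((R.orderIsoOfFin rfl).symm ⟨x, hx⟩ : Fin m) : ℕ) else 0)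
          ∈ Finset.Ioo (m - (n+1) + (ν₀:ℕ)) m := by
        intro x hx
        obtain ⟨hxR, hxge⟩ := Finset.mem_filter.mp hx
        rw [dif_pos hxR]
        set q := (R.orderIsoOfFin rfl).symm ⟨x, hxR⟩
        have hlt : gsel ν₀ < rfun q := by
          rw [hrq x hxR]; exact lt_of_lt_of_le hν₀' hxge
        have : (⟨m - (n+1) + (ν₀:ℕ), by omega⟩ : Fin m) < q :=
          rfun.strictMono.lt_iff_lt.mp hlt
        simp only [Finset.mem_Ioo]
        exact ⟨this, q.isLt⟩
      have hinj : Set.InjOn (fun x : Fin (j+1) => if hx : x ∈ R then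
          (((R.orderIsoOfFin rfl).symm ⟨x, hx⟩ : Fin m) : ℕ) else 0) ↑A := by
        intro x hx y hy heq
        have hxR : x ∈ R := (Finset.mem_filter.mp hx).1
        have hyR : y ∈ R := (Finset.mem_filter.mp hy).1
        simp only [dif_pos hxR, dif_pos hyR] at heq
        have := (R.orderIsoOfFin rfl).symm.injective (Fin.val_injective heq)
        exact Subtype.mk_eq_mk.mp this
      have hb := Finset.card_le_card_of_injOn _ hmaps hinj
      rw [Nat.card_Ioo] at hb
      have hν₀n : (ν₀ : ℕ) < n + 1 := ν₀.isLt
      omega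
    have hν₀n : (ν₀ : ℕ) < n + 1 := ν₀.isLt
    set cidx : Fin (n + 1 - (ν₀:ℕ)) → Fin (j+1) :=
      fun p => jfun ⟨(ν₀:ℕ) + p, by omega⟩ with hcidx
    have hcidx_ge : ∀ p, jfun ν₀ ≤ cidx p := by
      intro p
      exact jfun.monotone (by simp only [Fin.le_def]; omega)
    have hcidx_inj : Function.Injective cidx := by
      intro p q hpq
      have := jfun.injective hpq
      have h2 : (ν₀:ℕ) + (p:ℕ) = (ν₀:ℕ) + (q:ℕ) := congrArg Fin.val this
      exact Fin.ext (by omega)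
    have hjν₀ne : jfun ν₀ ≠ 0 := by
      intro h0
      rw [h0] at hν₀'
      exact absurd hν₀' (by simp)
    have hcidx_mem : ∀ p, cidx p ∈ J' := by
      intro p
      have h1 : cidx p ∈ J := hjmem _
      have h2 : cidx p ≠ 0 := by
        intro h0
        exact hjν₀ne (le_antisymm (h0 ▸ hcidx_ge p) (Fin.zero_le _))
      rw [hJdef] at h1
      rcases Finset.mem_insert.mp h1 with h'|h'
      · exact absurd h' h2
      · exact h'
    have hdep : ¬ LinearIndependent F
        (fun p : Fin (n+1-(ν₀:ℕ)) => (fun r : ↑A => T ↑r (cidx p))) := by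
      intro hli
      have hle := hli.fintype_card_le_finrank
      rw [Module.finrank_pi, Fintype.card_coe, Fintype.card_fin] at hle
      omega
    obtain ⟨β, hβsum, p₀, hp₀⟩ := Fintype.not_linearIndependent_iff.mp hdep
    have hstar : ∀ r, r ∈ R → ∑ p, β p * T r (cidx p) = 0 := by
      intro r hrR
      by_cases hrA : r ∈ A
      · have := congrFun hβsum ⟨r, hrA⟩
        simpa [Finset.sum_apply] using this
      · refine Finset.sum_eq_zero fun p _ => ?_
        have hnle : ¬ jfun ν₀ ≤ r := fun hle => hrA (Finset.mem_filter.mpr ⟨hrR, hle⟩)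
        have hlt : (r:ℕ) < (cidx p : ℕ) := by
          have h2 := hcidx_ge p
          rw [Fin.le_def] at h2
          rw [not_le, Fin.lt_def] at hnle
          omega
        rw [ha, if_neg (by omega)]
        ring
    set c₀ := cidx p₀ with hc₀def
    set bfun : Fin (j+1) → F := fun c => ∑ p, if cidx p = c then β p else 0 with hbfun
    have hbc₀ : bfun c₀ = β p₀ := by
      rw [hbfun]
      simp only
      rw [Finset.sum_eq_single p₀
        (fun p _ hne => if_neg (fun hc => hne (hcidx_inj hc)))
        (fun habs => absurd (Finset.mem_univ p₀) habs)]
      exact if_pos rfl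
    have hbR : ∀ r ∈ R, ∑ c ∈ J', bfun c * T r c = 0 := by
      intro r hrR
      have e : ∑ c ∈ J', bfun c * T r c = ∑ p, β p * T r (cidx p) := by
        rw [hbfun]
        simp only [Finset.sum_mul, ite_mul, zero_mul]
        rw [Finset.sum_comm]
        refine Finset.sum_congr rfl fun p _ => ?_
        rw [Finset.sum_ite_eq J' (cidx p) (fun c => β p * T r c), if_pos (hcidx_mem p)]
      rw [e]
      exact hstar r hrR
    set lam3 : Fin (j+1) → F := fun c => lam c - (lam c₀ / β p₀) * bfun c with hlam3
    have hlam3c₀ : lam3 c₀ = 0 := by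
      rw [hlam3]
      simp only
      rw [hbc₀, div_mul_cancel₀ _ hp₀]
      ring
    have hc₀J' : c₀ ∈ J' := hcidx_mem p₀
    have hnew : ∀ r, r ∉ K → T r 0 = ∑ c ∈ J'.erase c₀, lam3 c * T r c := by
      intro r hrK
      have hrR : r ∈ R := by rw [hRdef]; exact Finset.mem_compl.mpr hrK
      have e1 : ∑ c ∈ J', lam3 c * T r c
          = ∑ c ∈ J', lam c * T r c - (lam c₀ / β p₀) * ∑ c ∈ J', bfun c * T r c := by
        rw [Finset.mul_sum, ← Finset.sum_sub_distrib]
        refine Finset.sum_congr rfl fun c _ => ?_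
        rw [hlam3]
        ring
      have e2 : ∑ c ∈ J', lam3 c * T r c = T r 0 := by
        rw [e1, hbR r hrR, ← h r hrK]
        ring
      calc T r 0 = ∑ c ∈ J', lam3 c * T r c := e2.symm
        _ = ∑ c ∈ J'.erase c₀, lam3 c * T r c + lam3 c₀ * T r c₀ :=
            (Finset.sum_erase_add _ _ hc₀J').symm
        _ = ∑ c ∈ J'.erase c₀, lam3 c * T r c := by rw [hlam3c₀, zero_mul, add_zero]
    have hne : J'.Nonempty := ⟨c₀, hc₀J'⟩
    have hpos := Finset.card_pos.mpr hne
    exact IH (n-1) (by omega) (J'.erase c₀) K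
      (by rw [Finset.card_erase_of_mem hc₀J', hn])
      (fun hm => h0J (Finset.mem_of_mem_erase hm))
      (by rw [Finset.card_erase_of_mem hc₀J', hn]; omega) lam3 hnew

open Finset Submodule

section Aux
variable {F : Type*} [Field F] {j : ℕ}

theorem superregular_iff_maxSpan' 
    (T : Matrix (Fin (j + 1)) (Fin (j + 1)) F)
    (a : ℕ → F)
    (ha : ∀ r c : Fin (j+1), T r c = if (c:ℕ) ≤ (r:ℕ) then a ((r:ℕ)-(c:ℕ)) else 0)
    (hmax : ∀ S : Finset (Fin (j + 1) ⊕ Fin (j + 1)), S.card = j → Sum.inr 0 ∉ S →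
        (fun r => Matrix.fromCols (1 : Matrix (Fin (j + 1)) (Fin (j + 1)) F) T r (Sum.inr 0)) ∉
          Submodule.span F
            ((fun c => fun r => Matrix.fromCols (1 : Matrix (Fin (j + 1)) (Fin (j + 1)) F) T r c) '' ↑S))
    (s : ℕ) (i jc : Fin s → Fin (j + 1)) (hi : StrictMono i) (hjc : StrictMono jc)
    (hprop : ∀ ν : Fin s, (jc ν : ℕ) ≤ (i ν : ℕ)) : (T.submatrix i jc).det ≠ 0 := by
  classical
  intro hdet0
  set col : (Fin (j+1) ⊕ Fin (j+1)) → (Fin (j+1) → F) :=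
    fun c => fun r => Matrix.fromCols (1 : Matrix (Fin (j + 1)) (Fin (j + 1)) F) T r c
    with hcol
  have hPex : ∃ s, ∃ i jc : Fin s → Fin (j+1), StrictMono i ∧ StrictMono jc ∧
      (∀ ν, (jc ν : ℕ) ≤ (i ν : ℕ)) ∧ (T.submatrix i jc).det = 0 :=
    ⟨s, i, jc, hi, hjc, hprop, hdet0⟩
  have hspec := Nat.find_spec hPex
  have hs0 : Nat.find hPex ≠ 0 := by
    intro h0
    rw [h0] at hspec
    obtain ⟨i0, jc0, _, _, _, hd⟩ := hspec
    rw [Matrix.det_isEmpty] at hd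
    exact one_ne_zero hd
  obtain ⟨m, hm⟩ : ∃ m, Nat.find hPex = m + 1 := ⟨Nat.find hPex - 1, by omega⟩
  have hmin : ¬ ∃ i jc : Fin m → Fin (j+1), StrictMono i ∧ StrictMono jc ∧
      (∀ ν, (jc ν : ℕ) ≤ (i ν : ℕ)) ∧ (T.submatrix i jc).det = 0 :=
    Nat.find_min hPex (by omega)
  rw [hm] at hspec
  obtain ⟨i1, jc1, hi1, hjc1, hprop1, hdet1⟩ := hspec
  -- shift so that the first column is 0
  set d : ℕ := (jc1 0 : ℕ) with hd
  have hdle : ∀ ν, d ≤ (jc1 ν : ℕ) := fun ν => hjc1.monotone (Fin.zero_le ν)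
  have hdile : ∀ ν, d ≤ (i1 ν : ℕ) := fun ν => le_trans (hdle ν) (hprop1 ν)
  set i2 : Fin (m+1) → Fin (j+1) := fun ν => ⟨(i1 ν : ℕ) - d, by have := (i1 ν).isLt; omega⟩
    with hi2def
  set jc2 : Fin (m+1) → Fin (j+1) := fun ν => ⟨(jc1 ν : ℕ) - d, by have := (jc1 ν).isLt; omega⟩
    with hjc2def
  have hi2 : StrictMono i2 := by
    intro ν ν' hlt
    have h1 := hi1 hlt
    rw [Fin.lt_def] at h1 ⊢
    have := hdile ν
    simp only [hi2def]
    omega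
  have hjc2 : StrictMono jc2 := by
    intro ν ν' hlt
    have h1 := hjc1 hlt
    rw [Fin.lt_def] at h1 ⊢
    have := hdle ν
    simp only [hjc2def]
    omega
  have hprop2 : ∀ ν, (jc2 ν : ℕ) ≤ (i2 ν : ℕ) := by
    intro ν
    have := hprop1 ν
    simp only [hi2def, hjc2def]
    omega
  have hjc20 : jc2 0 = 0 := by
    apply Fin.ext
    rw [Fin.val_zero]
    show (jc1 0 : ℕ) - d = 0
    omega
  have hsub : T.submatrix i2 jc2 = T.submatrix i1 jc1 := by
    ext ν μ
    simp only [Matrix.submatrix_apply]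
    rw [ha, ha]
    have h1 := hdle μ
    have h2 := hdile ν
    by_cases hc : (jc1 μ : ℕ) ≤ (i1 ν : ℕ)
    · rw [if_pos hc, if_pos (by simp only [hi2def, hjc2def]; omega)]
      congr 1
      simp only [hi2def, hjc2def]
      omega
    · rw [if_neg hc, if_neg (by simp only [hi2def, hjc2def]; omega)]
  have hdet2 : (T.submatrix i2 jc2).det = 0 := by rw [hsub]; exact hdet1
  obtain ⟨lam, hlam0, hmul⟩ := Matrix.exists_mulVec_eq_zero_iff.mpr hdet2
  have hmulν : ∀ ν, ∑ μ, T (i2 ν) (jc2 μ) * lam μ = 0 := by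
    intro ν
    have := congrFun hmul ν
    simpa [Matrix.mulVec, dotProduct, Matrix.submatrix_apply] using this
  have hl0 : lam 0 ≠ 0 := by
    intro hz
    obtain ⟨ν, hν⟩ := Function.ne_iff.mp hlam0
    have hνne : ν ≠ 0 := by rintro rfl; exact hν hz
    obtain ⟨ν', rfl⟩ := Fin.exists_succ_eq_of_ne_zero hνne
    refine hmin ⟨i2 ∘ Fin.succ, jc2 ∘ Fin.succ, hi2.comp Fin.strictMono_succ,
      hjc2.comp Fin.strictMono_succ, fun μ => hprop2 μ.succ, ?_⟩
    refine Matrix.exists_mulVec_eq_zero_iff.mp ⟨lam ∘ Fin.succ, ?_, ?_⟩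
    · intro heq
      exact hν (by simpa using congrFun heq ν')
    · funext ν
      have h3 := hmulν ν.succ
      rw [Fin.sum_univ_succ, hz, mul_zero, zero_add] at h3
      simp only [Matrix.mulVec, dotProduct, Matrix.submatrix_apply,
        Function.comp_apply, Pi.zero_apply]
      exact h3
  -- build the spanning set S
  set Iset : Finset (Fin (j+1)) := Finset.image i2 Finset.univ with hIset
  set Jset : Finset (Fin (j+1)) := Finset.image jc2 Finset.univ with hJset
  have hmj : m ≤ j := by
    have := Fintype.card_le_of_injective i2 hi2.injective
    simpa using this
  have hIcard : Iset.card = m + 1 := by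
    rw [hIset, Finset.card_image_of_injective _ hi2.injective, Finset.card_univ,
      Fintype.card_fin]
  have hIc : Isetᶜ.card = j - m := by
    rw [Finset.card_compl, Fintype.card_fin, hIcard]
    omega
  have hJcard2 : Jset.card = m + 1 := by
    rw [hJset, Finset.card_image_of_injective _ hjc2.injective, Finset.card_univ,
      Fintype.card_fin]
  have h0Jset : (0 : Fin (j+1)) ∈ Jset := by
    rw [hJset]
    exact Finset.mem_image.mpr ⟨0, Finset.mem_univ _, hjc20⟩
  have hJe : (Jset.erase 0).card = m := by
    rw [Finset.card_erase_of_mem h0Jset, hJcard2]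
    omega
  set S : Finset (Fin (j+1) ⊕ Fin (j+1)) :=
    Isetᶜ.image Sum.inl ∪ (Jset.erase 0).image Sum.inr with hS
  have hdisj : Disjoint (Isetᶜ.image Sum.inl) ((Jset.erase 0).image Sum.inr) := by
    rw [Finset.disjoint_left]
    rintro x hx1 hx2
    obtain ⟨k, _, rfl⟩ := Finset.mem_image.mp hx1
    obtain ⟨c, _, hc⟩ := Finset.mem_image.mp hx2
    exact Sum.inl_ne_inr hc.symm
  have hScard : S.card = j := by
    rw [hS, Finset.card_union_of_disjoint hdisj,
      Finset.card_image_of_injective _ Sum.inl_injective,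
      Finset.card_image_of_injective _ Sum.inr_injective, hIc, hJe]
    omega
  have hS0 : Sum.inr (0 : Fin (j+1)) ∉ S := by
    rw [hS]
    intro hmem
    rcases Finset.mem_union.mp hmem with h'|h'
    · obtain ⟨k, _, hk⟩ := Finset.mem_image.mp h'
      exact Sum.inl_ne_inr hk
    · obtain ⟨c, hc, hc2⟩ := Finset.mem_image.mp h'
      rw [Sum.inr.injEq] at hc2
      rw [hc2] at hc
      exact (Finset.notMem_erase _ _) hc
  -- membership of the first column of T in the span
  set u : Fin (j+1) → F := fun r => ∑ μ, lam μ * T r (jc2 μ) with hu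
  have hu0 : ∀ ν, u (i2 ν) = 0 := by
    intro ν
    have := hmulν ν
    rw [hu]
    rw [← this]
    exact Finset.sum_congr rfl fun μ _ => mul_comm _ _
  have hcol_inl : ∀ k r, col (Sum.inl k) r = if r = k then 1 else 0 := by
    intro k r
    show Matrix.fromCols (1 : Matrix (Fin (j + 1)) (Fin (j + 1)) F) T r (Sum.inl k) = _
    rw [Matrix.fromCols_apply_inl, Matrix.one_apply]
  have hcol_inr : ∀ c r, col (Sum.inr c) r = T r c := by
    intro c r
    show Matrix.fromCols (1 : Matrix (Fin (j + 1)) (Fin (j + 1)) F) T r (Sum.inr c) = _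
    rw [Matrix.fromCols_apply_inr]
  have huspan : u ∈ Submodule.span F (col '' ↑S) := by
    have hurep : u = ∑ k ∈ Isetᶜ, u k • col (Sum.inl k) := by
      funext r
      rw [Finset.sum_apply]
      have : ∀ k ∈ Isetᶜ, (u k • col (Sum.inl k)) r = if r = k then u k else 0 := by
        intro k _
        rw [Pi.smul_apply, smul_eq_mul, hcol_inl, mul_ite, mul_one, mul_zero]
      rw [Finset.sum_congr rfl this, Finset.sum_ite_eq]
      by_cases hr : r ∈ Isetᶜ
      · rw [if_pos hr]
      · rw [if_neg hr]
        have : r ∈ Iset := by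
          by_contra hnot
          exact hr (Finset.mem_compl.mpr hnot)
        obtain ⟨ν, _, rfl⟩ := Finset.mem_image.mp this
        exact hu0 ν
    rw [hurep]
    refine sum_mem fun k hk => smul_mem _ _ (subset_span ?_)
    exact ⟨Sum.inl k, by
      rw [Finset.mem_coe, hS]
      exact Finset.mem_union_left _ (Finset.mem_image_of_mem _ hk), rfl⟩
  have hvmem : (fun r => Matrix.fromCols (1 : Matrix (Fin (j + 1)) (Fin (j + 1)) F) T r
      (Sum.inr 0)) ∈ Submodule.span F (col '' ↑S) := by
    have hveq : (fun r => Matrix.fromCols (1 : Matrix (Fin (j + 1)) (Fin (j + 1)) F) T r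
        (Sum.inr 0))
        = (lam 0)⁻¹ • (u - ∑ μ ∈ Finset.univ.erase 0, lam μ • col (Sum.inr (jc2 μ))) := by
      funext r
      show Matrix.fromCols (1 : Matrix (Fin (j + 1)) (Fin (j + 1)) F) T r (Sum.inr 0)
        = ((lam 0)⁻¹ • (u - ∑ μ ∈ Finset.univ.erase 0, lam μ • col (Sum.inr (jc2 μ)))) r
      rw [Pi.smul_apply, Pi.sub_apply, Finset.sum_apply, smul_eq_mul]
      have hsplit : u r = lam 0 * T r (jc2 0)
          + ∑ μ ∈ Finset.univ.erase 0, lam μ * T r (jc2 μ) :=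
        (Finset.add_sum_erase _ _ (Finset.mem_univ 0)).symm
      have hterm : ∀ μ ∈ Finset.univ.erase (0 : Fin (m+1)),
          (lam μ • col (Sum.inr (jc2 μ))) r = lam μ * T r (jc2 μ) := by
        intro μ _
        rw [Pi.smul_apply, smul_eq_mul, hcol_inr]
      rw [Finset.sum_congr rfl hterm, hsplit, hjc20, add_sub_cancel_right,
        inv_mul_cancel_left₀ hl0, Matrix.fromCols_apply_inr]
    rw [hveq]
    refine smul_mem _ _ (sub_mem huspan (sum_mem fun μ hμ => smul_mem _ _ (subset_span ?_)))
    refine ⟨Sum.inr (jc2 μ), ?_, rfl⟩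
    rw [Finset.mem_coe, hS]
    refine Finset.mem_union_right _ (Finset.mem_image_of_mem _ ?_)
    refine Finset.mem_erase.mpr ⟨?_, by rw [hJset]; exact Finset.mem_image_of_mem _ (Finset.mem_univ μ)⟩
    intro h0
    have hμ0 : μ ≠ 0 := (Finset.mem_erase.mp hμ).1
    exact hμ0 (hjc2.injective (h0.trans hjc20.symm))
  exact hmax S hScard hS0 hvmem

end Aux

theorem superregular_iff_maxSpan {F : Type*} [Field F] [Fintype F] {j : ℕ}
    (T : Matrix (Fin (j + 1)) (Fin (j + 1)) F) (hT : IsLTToeplitz T) :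
    Superregular T ↔
      ∀ S : Finset (Fin (j + 1) ⊕ Fin (j + 1)), S.card = j → Sum.inr 0 ∉ S →
        (fun r => Matrix.fromCols (1 : Matrix (Fin (j + 1)) (Fin (j + 1)) F) T r (Sum.inr 0)) ∉
          Submodule.span F
            ((fun c => fun r => Matrix.fromCols (1 : Matrix (Fin (j + 1)) (Fin (j + 1)) F) T r c) '' ↑S) := by
  classical
  obtain ⟨a, ha⟩ := hT
  constructor
  · rintro ⟨-, hdet⟩ S hcard h0S hv
    obtain ⟨g, hg⟩ := (span_helper _ S _).mp hv
    set K : Finset (Fin (j+1)) := S.toLeft with hK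
    set J' : Finset (Fin (j+1)) := S.toRight with hJ'
    have hcards : K.card + J'.card = j := by
      rw [hK, hJ', Finset.card_toLeft_add_card_toRight, hcard]
    have h0J' : (0 : Fin (j+1)) ∉ J' := by
      rw [hJ']
      intro hmem
      exact h0S (Finset.mem_toRight.mp hmem)
    refine superreg_key T a ha hdet J'.card J' K rfl h0J' (le_of_eq hcards)
      (fun c => g (Sum.inr c)) ?_
    intro r hr
    have hSd : K.disjSum J' = S := by rw [hK, hJ']; exact Finset.toLeft_disjSum_toRight
    rw [← hSd, Finset.sum_disjSum] at hg
    have hgr := congrFun hg r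
    rw [Pi.add_apply, Finset.sum_apply, Finset.sum_apply] at hgr
    have hleft : ∑ k ∈ K, (g (Sum.inl k) •
        (fun r' => Matrix.fromCols (1 : Matrix (Fin (j + 1)) (Fin (j + 1)) F) T r'
          (Sum.inl k))) r = 0 := by
      refine Finset.sum_eq_zero fun k hk => ?_
      have hne : r ≠ k := fun h => hr (h ▸ hk)
      rw [Pi.smul_apply, smul_eq_mul]
      show g (Sum.inl k) * Matrix.fromCols (1 : Matrix (Fin (j + 1)) (Fin (j + 1)) F) T r
        (Sum.inl k) = 0
      rw [Matrix.fromCols_apply_inl, Matrix.one_apply, if_neg hne, mul_zero]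
    have hright : ∀ c ∈ J', (g (Sum.inr c) •
        (fun r' => Matrix.fromCols (1 : Matrix (Fin (j + 1)) (Fin (j + 1)) F) T r'
          (Sum.inr c))) r = g (Sum.inr c) * T r c := by
      intro c _
      rw [Pi.smul_apply, smul_eq_mul]
      show g (Sum.inr c) * Matrix.fromCols (1 : Matrix (Fin (j + 1)) (Fin (j + 1)) F) T r
        (Sum.inr c) = _
      rw [Matrix.fromCols_apply_inr]
    rw [hleft, zero_add, Finset.sum_congr rfl hright] at hgr
    rw [Matrix.fromCols_apply_inr] at hgr
    exact hgr.symm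
  · intro hmax
    exact ⟨⟨a, ha⟩, superregular_iff_maxSpan' T a ha hmax⟩
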